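/- Let 0 < p < ∞. For any positive Borel measure μ on 𝔻 that is a p-Carleson measure, μ is a vanishing p-Carleson measure (i.e. μ(S(I))/|I|^p → 0 as |I| → 0) if and only if ‖μ - μ_r‖_p → 0 as r → 1⁻, where μ_r is the restriction of μ to {z : |z| < r} and ‖ν‖_p = sup_{I ⊂ ∂𝔻} ν(S(I))/|I|^p. -/

import Mathlib

open Complex MeasureTheory Metric Set Filter Topology

noncomputable section

/-- Möbius involution σ_a(z) = (a-z)/(1 - conj(a) z). -/
def sig (a z : ℂ) : ℂ := (a - z) / (1 - (starRingEnd ℂ) a * z)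

/-- p-th power of the Dirichlet-type norm:
`|f(0)|^p + (1/π) ∫_𝔻 |f'(z)|^p (1-|z|²)^{p-1} dA(z)`. -/
def DpP (p : ℝ) (f : ℂ → ℂ) : ℝ :=
  ‖f 0‖ ^ p +
    Real.pi⁻¹ * ∫ z in ball (0 : ℂ) 1,
      ‖deriv f z‖ ^ p * (1 - ‖z‖ ^ 2) ^ (p - 1)

/-- The inner F(p,p-1,1) integral at the point `a`:
`(1/π) ∫_𝔻 |F'(z)|^p (1-|z|²)^{p-1} (1-|σ_a(z)|²) dA(z)`. -/
def FpInt (p : ℝ) (F : ℂ → ℂ) (a : ℂ) : ℝ :=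
  Real.pi⁻¹ * ∫ z in ball (0 : ℂ) 1,
    ‖deriv F z‖ ^ p * (1 - ‖z‖ ^ 2) ^ (p - 1) *
      (1 - ‖sig a z‖ ^ 2)

/-- p-th power of the F(p,p-1,1) norm. -/
def FpP (p : ℝ) (F : ℂ → ℂ) : ℝ :=
  ‖F 0‖ ^ p + ⨆ a : ball (0 : ℂ) 1, FpInt p F (a : ℂ)

/-- Volterra operator `T_g f(z) = ∫_0^z f(ξ) g'(ξ) dξ`, parameterized along `[0, z]`. -/
def Tg (g f : ℂ → ℂ) (z : ℂ) : ℂ :=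
  ∫ t in (0 : ℝ)..1, f ((t : ℂ) * z) * deriv g ((t : ℂ) * z) * z

/-- Companion operator `I_g f(z) = ∫_0^z f'(ξ) g(ξ) dξ`. -/
def Ig (g f : ℂ → ℂ) (z : ℂ) : ℂ :=
  ∫ t in (0 : ℝ)..1, deriv f ((t : ℂ) * z) * g ((t : ℂ) * z) * z

/-- Carleson square over the arc of normalized length `h` centered at `e^{iθ}`. -/
def box (θ h : ℝ) : Set ℂ :=
  {z | ∃ r t : ℝ, 1 - h ≤ r ∧ r < 1 ∧ |t| ≤ Real.pi * h ∧
      z = (r : ℂ) * Complex.exp (Complex.I * ((θ : ℂ) + (t : ℂ)))}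

/-- Bloch seminorm `sup_{z∈𝔻} (1-|z|²)|g'(z)|`. -/
def BlochN (g : ℂ → ℂ) : ℝ :=
  ⨆ z : ball (0 : ℂ) 1, (1 - ‖(z : ℂ)‖ ^ 2) * ‖deriv g (z : ℂ)‖

/-- The `p`-Carleson "norm" of a measure, as a supremum over Carleson squares. -/
def cnormE (p : ℝ) (ν : Measure ℂ) : ENNReal :=
  ⨆ θ : ℝ, ⨆ h : Set.Ioc (0 : ℝ) 1,
    ν (box θ (h : ℝ)) / ENNReal.ofReal ((h : ℝ) ^ p)

lemma mem_box_abs {θ h : ℝ} (hh : h ≤ 1) {z : ℂ} (hz : z ∈ box θ h) :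
    1 - h ≤ ‖z‖ ∧ ‖z‖ < 1 := by
  obtain ⟨r, t, h1, h2, h3, rfl⟩ := hz
  have hre : (Complex.I * ((θ : ℂ) + (t : ℂ))).re = 0 := by simp
  have : ‖(r : ℂ) * Complex.exp (Complex.I * ((θ : ℂ) + (t : ℂ)))‖ = r := by
    rw [norm_mul, Complex.norm_exp, hre, Real.exp_zero, mul_one, Complex.norm_real, Real.norm_eq_abs]
    exact abs_of_nonneg (by linarith)
  rw [this]; exact ⟨h1, h2⟩

lemma ball_subset_box : ball (0 : ℂ) 1 ⊆ box 0 1 := by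
  intro z hz
  rw [mem_ball_zero_iff] at hz
  rcases eq_or_ne z 0 with rfl | hz0
  · exact ⟨0, 0, by norm_num, by norm_num, by simpa using Real.pi_pos.le, by simp⟩
  · refine ⟨‖z‖, Complex.arg z, by simp [norm_nonneg], hz,
      by simpa using Complex.abs_arg_le_pi z, ?_⟩
    have h4 : ((0:ℝ):ℂ) + (z.arg:ℂ) = (z.arg:ℂ) := by push_cast; ring
    rw [h4, mul_comm Complex.I, Complex.norm_mul_exp_arg_mul_I]

lemma div_le_cnorm (p : ℝ) (ν : Measure ℂ) (θ : ℝ) {h : ℝ} (h0 : 0 < h) (h1 : h ≤ 1) :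
    ν (box θ h) / ENNReal.ofReal (h ^ p) ≤ cnormE p ν :=
  le_iSup_of_le θ (le_iSup_of_le (⟨h, h0, h1⟩ : Set.Ioc (0:ℝ) 1) le_rfl)

lemma measure_box_le (p : ℝ) (ν : Measure ℂ) (θ : ℝ) {h : ℝ} (h0 : 0 < h) (h1 : h ≤ 1) :
    ν (box θ h) ≤ cnormE p ν * ENNReal.ofReal (h ^ p) := by
  have hpos : (0:ℝ) < h ^ p := Real.rpow_pos_of_pos h0 p
  have := div_le_cnorm p ν θ h0 h1
  rwa [ENNReal.div_le_iff (by simp [hpos]) (by simp)] at this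

/-- a p-Carleson measure μ is vanishing p-Carleson iff
`‖μ - μ_r‖_p → 0` as `r → 1⁻`. -/
theorem stmt5 (p : ℝ) (hp : 0 < p) (μ : Measure ℂ) (hc : cnormE p μ < ⊤) :
    (∀ ε : ℝ, 0 < ε → ∃ δ : ℝ, 0 < δ ∧ ∀ θ h : ℝ, 0 < h → h < δ → h ≤ 1 →
        μ (box θ h) ≤ ENNReal.ofReal (ε * h ^ p)) ↔
      Tendsto (fun r : ℝ => cnormE p (μ.restrict ((ball (0 : ℂ) r)ᶜ)))
        (𝓝[<] (1 : ℝ)) (𝓝 0) := by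
  have hball : μ (ball (0 : ℂ) 1) < ⊤ := by
    have h1 : μ (ball (0:ℂ) 1) ≤ μ (box 0 1) := measure_mono ball_subset_box
    have h2 := measure_box_le p μ 0 one_pos le_rfl
    have : μ (box 0 1) < ⊤ := lt_of_le_of_lt h2 (by
      rw [Real.one_rpow]
      exact ENNReal.mul_lt_top hc (by simp))
    exact lt_of_le_of_lt h1 this
  constructor
  · -- vanishing → tendsto
    intro hvan
    rw [ENNReal.tendsto_nhds_zero]
    intro ε hε
    -- choose a real ε₀ with ofReal ε₀ ≤ ε
    obtain ⟨ε₀, hε₀, hε₀le⟩ : ∃ c : ℝ, 0 < c ∧ ENNReal.ofReal c ≤ ε := by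
      refine ⟨(min 1 ε).toReal, ?_, ?_⟩
      · rw [ENNReal.toReal_pos_iff]
        exact ⟨lt_min one_pos hε, lt_of_le_of_lt (min_le_left _ _) (by norm_num)⟩
      · rw [ENNReal.ofReal_toReal (by
          exact ne_top_of_le_ne_top (by norm_num) (min_le_left 1 ε))]
        exact min_le_right _ _
    obtain ⟨δ, hδ, hδbox⟩ := hvan ε₀ hε₀
    set δ' := min δ 1 with hδ'def
    have hδ'pos : 0 < δ' := lt_min hδ one_pos
    have hδ'le1 : δ' ≤ 1 := min_le_right _ _
    -- tail measure of annulus goes to 0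
    have htail : ∃ r₀ : ℝ, r₀ < 1 ∧ ∀ r, r₀ < r →
        μ (ball (0:ℂ) 1 \ ball (0:ℂ) r) ≤ ENNReal.ofReal (ε₀ * δ' ^ p) := by
      set s : ℕ → Set ℂ := fun n => ball (0:ℂ) 1 \ ball (0:ℂ) (1 - 1/(n+1)) with hs
      have hanti : Antitone s := by
        intro n m hnm
        apply diff_subset_diff_right
        apply ball_subset_ball
        have : (1:ℝ)/(m+1) ≤ 1/(n+1) := by
          apply one_div_le_one_div_of_le (by positivity)
          push_cast; linarith [(Nat.cast_le (α := ℝ)).mpr hnm]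
        linarith
      have hmeas : ∀ n, NullMeasurableSet (s n) μ := fun n =>
        ((measurableSet_ball.diff measurableSet_ball)).nullMeasurableSet
      have hfin : ∃ n, μ (s n) ≠ ⊤ := ⟨0, (lt_of_le_of_lt (measure_mono diff_subset) hball).ne⟩
      have hempty : (⋂ n, s n) = ∅ := by
        ext z
        simp only [mem_iInter, mem_empty_iff_false, iff_false, not_forall]
        by_cases hz : z ∈ ball (0:ℂ) 1
        · rw [mem_ball_zero_iff] at hz
          obtain ⟨n, hn⟩ := exists_nat_one_div_lt (show (0:ℝ) < 1 - ‖z‖ by linarith)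
          refine ⟨n, fun hmem => ?_⟩
          have := hmem.2
          rw [mem_ball_zero_iff] at this
          push_neg at this
          linarith
        · exact ⟨0, fun hmem => hz hmem.1⟩
      have htend := MeasureTheory.tendsto_measure_iInter_atTop hmeas hanti hfin
      rw [hempty, measure_empty] at htend
      have hpos : (0:ENNReal) < ENNReal.ofReal (ε₀ * δ' ^ p) := by
        rw [ENNReal.ofReal_pos]; positivity
      obtain ⟨n, hn⟩ := (ENNReal.tendsto_nhds_zero.mp htend _ hpos).exists
      refine ⟨1 - 1/(n+1), by
        have : (0:ℝ) < 1/(n+1) := by positivity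
        linarith, fun r hr => ?_⟩
      refine le_trans (measure_mono ?_) hn
      apply diff_subset_diff_right
      exact ball_subset_ball hr.le
    obtain ⟨r₀, hr₀, hr₀tail⟩ := htail
    have hIoo : Ioo r₀ 1 ∈ 𝓝[<] (1:ℝ) := Ioo_mem_nhdsLT_of_mem ⟨hr₀, le_rfl⟩
    filter_upwards [hIoo] with r hr
    -- bound cnormE of the restricted measure
    refine le_trans ?_ hε₀le
    apply iSup_le; intro θ
    apply iSup_le; rintro ⟨h, hh0, hh1⟩
    simp only
    apply ENNReal.div_le_of_le_mul
    rw [← ENNReal.ofReal_mul hε₀.le]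
    set ν := μ.restrict ((ball (0:ℂ) r)ᶜ)
    by_cases hcase : h < δ
    · -- small h : use vanishing directly
      have : ν (box θ h) ≤ μ (box θ h) :=
        Measure.restrict_le_self _
      exact le_trans this (hδbox θ h hh0 hcase hh1)
    · -- h ≥ δ ≥ δ'
      push_neg at hcase
      have hδ'h : δ' ≤ h := le_trans (min_le_left _ _) hcase
      have h1 : ν (box θ h) ≤ μ (ball (0:ℂ) 1 \ ball (0:ℂ) r) := by
        rw [Measure.restrict_apply' measurableSet_ball.compl]
        apply measure_mono
        rintro z ⟨hz1, hz2⟩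
        have := mem_box_abs hh1 hz1
        refine ⟨mem_ball_zero_iff.mpr (by simpa using this.2), hz2⟩
      refine le_trans h1 (le_trans (hr₀tail r hr.1) (ENNReal.ofReal_le_ofReal ?_))
      have : δ' ^ p ≤ h ^ p := Real.rpow_le_rpow hδ'pos.le hδ'h hp.le
      nlinarith [Real.rpow_pos_of_pos hδ'pos p]
  · -- tendsto → vanishing
    intro htend ε hε
    have hev : ∀ᶠ r in 𝓝[<] (1:ℝ),
        cnormE p (μ.restrict ((ball (0:ℂ) r)ᶜ)) ≤ ENNReal.ofReal ε := by
      exact ENNReal.tendsto_nhds_zero.mp htend _ (ENNReal.ofReal_pos.mpr hε)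
    obtain ⟨r, hrcn, hr1⟩ := (hev.and self_mem_nhdsWithin).exists
    refine ⟨1 - r, sub_pos.mpr hr1, fun θ h hh0 hhδ hh1 => ?_⟩
    set ν := μ.restrict ((ball (0:ℂ) r)ᶜ)
    have hsub : box θ h ⊆ (ball (0:ℂ) r)ᶜ := by
      intro z hz
      have := (mem_box_abs hh1 hz).1
      simp only [mem_compl_iff, mem_ball_zero_iff, not_lt]
      linarith
    have heq : ν (box θ h) = μ (box θ h) := by
      rw [Measure.restrict_apply' measurableSet_ball.compl, inter_eq_left.mpr hsub]
    have hle := measure_box_le p ν θ hh0 hh1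
    rw [heq] at hle
    refine le_trans hle ?_
    rw [ENNReal.ofReal_mul hε.le]
    exact mul_le_mul_left hrcn _
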